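/- arXiv:1208.2091 — 4 statements merged into one kernel-verified Lean document; each statement's English description precedes it below -/
import Mathlib

section
/- Let u₁, ..., u_m be contracting similarities of ℝ^d and suppose there is a finite collection of proper affine subspaces L₁, ..., L_k of ℝ^d which is invariant (as a collection) under each u_i, with ⋂_{i=1}^k L_i = ∅. Then there exists N < k with ⋂_{i=1}^N L_i ≠ ∅ and ⋂_{i=1}^{N+1} L_i = ∅, and this leads to a contradiction: such an invariant collection with empty total intersection cannot exist, since u₁^{k!} fixes each L_i and hence preserves the positive distance d(⋂_{i=1}^N L_i, L_{N+1}) > 0, contradicting that u₁^{k!} is a strict contraction. -/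
/-- If a finite collection of nonempty proper affine subspaces of ℝ^d is
invariant (as a collection) under each member of a family of contracting similarities,
then the total intersection of the collection is nonempty. -/
theorem stmt2 (d k m : ℕ) (hm : 1 ≤ m)
    (u : Fin m → EuclideanSpace ℝ (Fin d) → EuclideanSpace ℝ (Fin d))
    (hu : ∀ i, ∃ r : ℝ, 0 < r ∧ r < 1 ∧ ∀ x y, dist (u i x) (u i y) = r * dist x y)
    (L : Fin k → AffineSubspace ℝ (EuclideanSpace ℝ (Fin d)))
    (hproper : ∀ j, L j ≠ ⊤)
    (hne : ∀ j, (L j : Set (EuclideanSpace ℝ (Fin d))).Nonempty)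
    (hinv : ∀ i j, ∃ j', u i '' (L j : Set (EuclideanSpace ℝ (Fin d))) = (L j' : Set (EuclideanSpace ℝ (Fin d)))) :
    (⋂ j, (L j : Set (EuclideanSpace ℝ (Fin d)))).Nonempty := by
  classical
  set i0 : Fin m := ⟨0, hm⟩
  obtain ⟨r, hr0, hr1, hdist⟩ := hu i0
  set u0 : EuclideanSpace ℝ (Fin d) → EuclideanSpace ℝ (Fin d) := u i0 with hu0
  obtain ⟨K, hKr⟩ : ∃ K : NNReal, (K : ℝ) = r := ⟨⟨r, hr0.le⟩, rfl⟩
  have hK1 : K < 1 := by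
    rw [← NNReal.coe_lt_coe, hKr]; exact hr1
  have hLip : LipschitzWith K u0 :=
    LipschitzWith.of_dist_le_mul fun x y => by rw [hdist x y, hKr]
  have hC : ContractingWith K u0 := ⟨hK1, hLip⟩
  -- u0 is injective
  have hinj : Function.Injective u0 := by
    intro x y hxy
    have h := hdist x y
    rw [hxy, dist_self] at h
    have h0 : dist x y = 0 := by
      rcases (mul_eq_zero.mp h.symm) with h' | h'
      · exact absurd h' hr0.ne'
      · exact h'
    exact dist_eq_zero.mp h0
  -- choose the map g on indices
  choose g hgspec using fun j => hinv i0 j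
  -- iterate images
  have hiter : ∀ (n : ℕ) (j : Fin k),
      u0^[n] '' (L j : Set (EuclideanSpace ℝ (Fin d))) = (L (g^[n] j) : Set _) := by
    intro n
    induction n with
    | zero => intro j; simp
    | succ n ih =>
      intro j
      rw [Function.iterate_succ', Set.image_comp, ih j, Function.iterate_succ_apply']
      exact hgspec (g^[n] j)
  -- global fixed point
  have hx0 : Function.IsFixedPt u0 (ContractingWith.fixedPoint u0 hC) :=
    ContractingWith.fixedPoint_isFixedPt hC
  set x0 : EuclideanSpace ℝ (Fin d) := ContractingWith.fixedPoint u0 hC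
  refine ⟨x0, Set.mem_iInter.mpr fun j => ?_⟩
  -- pigeonhole
  obtain ⟨a', b', hne'', hab⟩ :=
    Finite.exists_ne_map_eq_of_infinite (fun n : ℕ => g^[n] j)
  obtain ⟨a, b, hlt, habeq⟩ : ∃ a b : ℕ, a < b ∧ g^[a] j = g^[b] j := by
    rcases lt_or_gt_of_ne hne'' with h | h
    · exact ⟨a', b', h, hab⟩
    · exact ⟨b', a', h, hab.symm⟩
  obtain ⟨p, hp1, hpb⟩ : ∃ p : ℕ, 1 ≤ p ∧ a + p = b := ⟨b - a, by omega, by omega⟩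
  have hcomp : u0^[a] ∘ u0^[p] = u0^[b] := by
    rw [← Function.iterate_add]; rw [hpb]
  have himg : u0^[p] '' (L j : Set (EuclideanSpace ℝ (Fin d))) = (L j : Set _) := by
    have h1 : u0^[a] '' (u0^[p] '' (L j : Set (EuclideanSpace ℝ (Fin d))))
        = u0^[a] '' (L j : Set _) := by
      rw [← Set.image_comp, hcomp, hiter, hiter, habeq]
    exact Set.image_injective.mpr (hinj.iterate a) h1
  -- v := u0^[p] is contracting
  have hLipv : LipschitzWith (K ^ p) u0^[p] := hLip.iterate p
  have hKp1 : K ^ p < 1 := pow_lt_one₀ (zero_le (a := K)) hK1 (by omega)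
  have hCv : ContractingWith (K ^ p) u0^[p] := ⟨hKp1, hLipv⟩
  -- L j is complete
  have hclosed : IsClosed (L j : Set (EuclideanSpace ℝ (Fin d))) :=
    (L j).closed_of_finiteDimensional
  have hcomplete : IsComplete (L j : Set (EuclideanSpace ℝ (Fin d))) := hclosed.isComplete
  have hmaps : Set.MapsTo u0^[p] (L j : Set (EuclideanSpace ℝ (Fin d))) (L j : Set _) := by
    intro x hx
    rw [← himg]; exact ⟨x, hx, rfl⟩
  -- restriction is contracting
  have hCrest : ContractingWith (K ^ p) (hmaps.restrict u0^[p] _ _) := by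
    refine ⟨hKp1, fun x y => ?_⟩
    have heq : edist (hmaps.restrict u0^[p] _ _ x) (hmaps.restrict u0^[p] _ _ y)
        = edist (u0^[p] x.val) (u0^[p] y.val) := rfl
    rw [heq]
    exact hLipv x.val y.val
  obtain ⟨z, hzj⟩ := hne j
  obtain ⟨y, hyL, hyfix, -, -⟩ :=
    ContractingWith.exists_fixedPoint' hcomplete hmaps hCrest hzj (edist_ne_top _ _)
  have hx0fix : Function.IsFixedPt u0^[p] x0 := hx0.iterate p
  have hxy := hCv.fixedPoint_unique' hx0fix hyfix
  rw [hxy]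
  exact hyL
end

section
/- Let M: ℝ^N → ℝ^M be a nonzero linear map with operator norm t = ‖M‖_op, and let v be a unit vector in ℝ^N with ‖Mv‖ = t. Let V ⊆ ℝ^M be the hyperplane through 0 perpendicular to Mv, and let W = M^{-1}(V) ⊆ ℝ^N. Then for any c > 0, the preimage M^{-1}(B(0, c)) of the closed ball of radius c around 0 is contained in the (c/t)-neighborhood of W. -/
open scoped RealInnerProductSpace

/-- For a nonzero linear map M : ℝ^N → ℝ^M with operator norm t attained
at a unit vector v, with V the hyperplane through 0 perpendicular to Mv and W = M⁻¹(V),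
the preimage of the closed ball B(0,c) is contained in the (c/t)-neighborhood of W. -/
theorem stmt6 (N M : ℕ)
    (f : EuclideanSpace ℝ (Fin N) →L[ℝ] EuclideanSpace ℝ (Fin M))
    (hf : f ≠ 0) (t : ℝ) (ht : t = ‖f‖)
    (v : EuclideanSpace ℝ (Fin N)) (hv : ‖v‖ = 1) (hfv : ‖f v‖ = t)
    (V : Set (EuclideanSpace ℝ (Fin M))) (hV : V = {y | ⟪f v, y⟫ = 0})
    (W : Set (EuclideanSpace ℝ (Fin N))) (hW : W = f ⁻¹' V)
    (c : ℝ) (hc : 0 < c) :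
    f ⁻¹' (Metric.closedBall 0 c) ⊆ {x | Metric.infDist x W ≤ c / t} := by
  have ht0 : 0 < t := by rw [ht]; exact norm_pos_iff.mpr hf
  intro x hx
  simp only [Set.mem_preimage, Metric.mem_closedBall, dist_zero_right] at hx
  set η : ℝ := ⟪f v, f x⟫ / t ^ 2 with hη
  have hmem : x - η • v ∈ W := by
    rw [hW, hV]
    simp only [Set.mem_preimage, Set.mem_setOf_eq, map_sub, map_smul, inner_sub_right,
      inner_smul_right, real_inner_self_eq_norm_sq, hfv, hη]
    field_simp
    simp
  have hdist : Metric.infDist x W ≤ |η| := by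
    calc Metric.infDist x W ≤ dist x (x - η • v) := Metric.infDist_le_dist_of_mem hmem
      _ = |η| := by
        rw [dist_eq_norm]
        simp [norm_smul, hv]
  refine hdist.trans ?_
  have hCS : |⟪f v, f x⟫| ≤ t * c := by
    calc |⟪f v, f x⟫| ≤ ‖f v‖ * ‖f x‖ := abs_real_inner_le_norm _ _
      _ ≤ t * c := by rw [hfv]; exact mul_le_mul_of_nonneg_left hx ht0.le
  rw [hη, abs_div, abs_of_pos (by positivity : (0:ℝ) < t ^ 2)]
  rw [div_le_div_iff₀ (by positivity) ht0]
  calc |⟪f v, f x⟫| * t ≤ (t * c) * t := mul_le_mul_of_nonneg_right hCS ht0.le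
    _ = c * t ^ 2 := by ring
end

section
/- In the setting of the previous minor-determinant construction: the second derivative satisfies |∇_{A''}∇_{A'} D_{(I,J)}(A)| ≤ v² · M_{v−2}(A) · ‖A'‖ · ‖A''‖, where M_{v−2}(A) is the maximum absolute value of (v−2)×(v−2) minors D_{(I'',J'')}(A), with the convention M_{−1}(A) = M_0(A) = 1. -/
/-- The augmented column vector B_j(A) ∈ ℝ^{M+N}: first M coordinates the j-th column of A,
last N coordinates the j-th standard basis vector of ℝ^N. -/
noncomputable def Bvec {M N : ℕ} (A : Matrix (Fin M) (Fin N) ℝ) (j : Fin N) :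
    EuclideanSpace ℝ (Fin (M + N)) :=
  WithLp.toLp 2 (fun l => Fin.addCases (fun i : Fin M => A i j) (fun i : Fin N => if i = j then 1 else 0) l)

/-- The v×v minor determinant D_{(I,J)}(A) = det (B_{i_k}(A) · Y_{j_ℓ}), where the index
sets I, J of size v are given by embeddings e, f : Fin v ↪ Fin N. -/
noncomputable def minorD {M N : ℕ} (v : ℕ) (Y : Fin N → EuclideanSpace ℝ (Fin (M + N)))
    (e f : Fin v ↪ Fin N) (A : Matrix (Fin M) (Fin N) ℝ) : ℝ :=
  Matrix.det (Matrix.of fun k l : Fin v => (inner ℝ (Bvec A (e k)) (Y (f l)) : ℝ))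

/-- M_v(A): the largest absolute value of a v×v minor (with M_0(A)=1, and junk value 0 if v>N). -/
noncomputable def minorMax {M N : ℕ} (v : ℕ) (Y : Fin N → EuclideanSpace ℝ (Fin (M + N)))
    (A : Matrix (Fin M) (Fin N) ℝ) : ℝ :=
  ⨆ ef : (Fin v ↪ Fin N) × (Fin v ↪ Fin N), |minorD v Y ef.1 ef.2 A|

/-- Frobenius (Euclidean) norm of a matrix. -/
noncomputable def frobNorm {M N : ℕ} (A : Matrix (Fin M) (Fin N) ℝ) : ℝ :=
  Real.sqrt (∑ i, ∑ j, (A i j) ^ 2)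

/-! ### Auxiliary material -/

open Matrix

/-- Determinant as a continuous multilinear map in the rows. -/
noncomputable def detCML (v : ℕ) :
    ContinuousMultilinearMap ℝ (fun _ : Fin v => (Fin v → ℝ)) ℝ :=
  MultilinearMap.mkContinuous
    (Matrix.detRowAlternating : (Fin v → ℝ) [⋀^Fin v]→ₗ[ℝ] ℝ).toMultilinearMap
    (Nat.factorial v) (by
      intro m
      have key : ∀ σ : Equiv.Perm (Fin v), |∏ i, m (σ i) i| ≤ ∏ i, ‖m i‖ := by
        intro σ
        rw [Finset.abs_prod]
        calc ∏ i, |m (σ i) i| ≤ ∏ i, ‖m (σ i)‖ :=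
              Finset.prod_le_prod (fun i _ => abs_nonneg _)
                (fun i _ => norm_le_pi_norm (m (σ i)) i)
          _ = ∏ i, ‖m i‖ := Equiv.prod_comp σ fun i => ‖m i‖
      have h0 : (Matrix.detRowAlternating : (Fin v → ℝ) [⋀^Fin v]→ₗ[ℝ] ℝ).toMultilinearMap m
          = Matrix.det (Matrix.of m) := rfl
      rw [h0, Matrix.det_apply']
      calc ‖∑ σ : Equiv.Perm (Fin v), ((Equiv.Perm.sign σ : ℤ) : ℝ) * ∏ i, Matrix.of m (σ i) i‖
          ≤ ∑ σ : Equiv.Perm (Fin v), ‖((Equiv.Perm.sign σ : ℤ) : ℝ) * ∏ i, Matrix.of m (σ i) i‖ :=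
            norm_sum_le _ _
        _ ≤ ∑ _σ : Equiv.Perm (Fin v), ∏ i, ‖m i‖ := by
            refine Finset.sum_le_sum fun σ _ => ?_
            rw [norm_mul]
            have h1 : ‖((Equiv.Perm.sign σ : ℤ) : ℝ)‖ = 1 := by
              rcases Int.units_eq_one_or (Equiv.Perm.sign σ) with h | h <;> simp [h]
            rw [h1, one_mul]
            rw [show ‖∏ i, Matrix.of m (σ i) i‖ = |∏ i, m (σ i) i| from rfl]
            exact key σ
        _ = (Nat.factorial v : ℝ) * ∏ i, ‖m i‖ := by
            rw [Finset.sum_const, Finset.card_univ, Fintype.card_perm, Fintype.card_fin,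
              nsmul_eq_mul])

lemma hasDerivAt_det_affine {v : ℕ} (x y : Fin v → Fin v → ℝ) :
    HasDerivAt (fun t : ℝ => Matrix.det (Matrix.of (x + t • y)))
      (∑ k, Matrix.det (Matrix.of (Function.update x k (y k)))) 0 := by
  classical
  have hc : HasDerivAt (fun t : ℝ => x + t • y) y 0 := by
    simpa using ((hasDerivAt_id (0 : ℝ)).smul_const y).const_add x
  have hd := (detCML v).hasFDerivAt (x := x + (0 : ℝ) • y)
  have h2 := hd.comp_hasDerivAt 0 hc
  rw [zero_smul, add_zero] at h2
  have h4 : ((detCML v).linearDeriv x) y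
      = ∑ k, Matrix.det (Matrix.of (Function.update x k (y k))) := by
    rw [ContinuousMultilinearMap.linearDeriv_apply]
    rfl
  rw [← h4]
  exact h2

lemma update_add_smul {v : ℕ} (x y : Fin v → Fin v → ℝ) (k : Fin v) (p : Fin v → ℝ) (s : ℝ) :
    Function.update (x + s • y) k p
      = Function.update x k p + s • Function.update y k (0 : Fin v → ℝ) := by
  classical
  funext k'
  by_cases h : k' = k
  · subst h; simp
  · simp [Function.update_of_ne h]

lemma deriv_deriv_det {v : ℕ} (Gr Pr Qr : Fin v → Fin v → ℝ) :
    deriv (fun s : ℝ => deriv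
        (fun τ : ℝ => Matrix.det (Matrix.of ((Gr + s • Qr) + τ • Pr))) 0) 0
      = ∑ k, ∑ k', Matrix.det (Matrix.of (Function.update (Function.update Gr k (Pr k)) k'
          (Function.update Qr k (0 : Fin v → ℝ) k'))) := by
  classical
  have hinner : ∀ s : ℝ,
      deriv (fun τ : ℝ => Matrix.det (Matrix.of ((Gr + s • Qr) + τ • Pr))) 0
        = ∑ k, Matrix.det (Matrix.of (Function.update (Gr + s • Qr) k (Pr k))) :=
    fun s => (hasDerivAt_det_affine (Gr + s • Qr) Pr).deriv
  simp only [hinner]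
  have houter : HasDerivAt
      (fun s : ℝ => ∑ k, Matrix.det (Matrix.of (Function.update (Gr + s • Qr) k (Pr k))))
      (∑ k, ∑ k', Matrix.det (Matrix.of (Function.update (Function.update Gr k (Pr k)) k'
          (Function.update Qr k (0 : Fin v → ℝ) k')))) 0 := by
    refine HasDerivAt.fun_sum fun k _ => ?_
    have h := hasDerivAt_det_affine (Function.update Gr k (Pr k))
      (Function.update Qr k (0 : Fin v → ℝ))
    have hfn : (fun s : ℝ => Matrix.det (Matrix.of (Function.update (Gr + s • Qr) k (Pr k))))
        = fun s : ℝ => Matrix.det (Matrix.of (Function.update Gr k (Pr k)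
            + s • Function.update Qr k (0 : Fin v → ℝ))) := by
      funext s; rw [update_add_smul]
    rw [hfn]
    exact h
  exact houter.deriv

lemma abs_minorD_le {M N : ℕ} (v : ℕ) (Y : Fin N → EuclideanSpace ℝ (Fin (M + N)))
    (e f : Fin v ↪ Fin N) (A : Matrix (Fin M) (Fin N) ℝ) :
    |minorD v Y e f A| ≤ minorMax v Y A :=
  le_ciSup (f := fun ef : (Fin v ↪ Fin N) × (Fin v ↪ Fin N) => |minorD v Y ef.1 ef.2 A|)
    (Set.Finite.bddAbove (Set.finite_range _)) ⟨e, f⟩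

lemma minorMax_nonneg {M N : ℕ} (v : ℕ) (hvN : v ≤ N)
    (Y : Fin N → EuclideanSpace ℝ (Fin (M + N))) (A : Matrix (Fin M) (Fin N) ℝ) :
    0 ≤ minorMax v Y A :=
  le_trans (abs_nonneg _) (abs_minorD_le v Y (Fin.castLEEmb hvN) (Fin.castLEEmb hvN) A)

lemma abs_det_single_row {w : ℕ} (Mm : Matrix (Fin (w + 1)) (Fin (w + 1)) ℝ)
    (k l : Fin (w + 1)) (h : ∀ j, Mm k j = if j = l then 1 else 0) :
    |Mm.det| = |(Mm.submatrix k.succAbove l.succAbove).det| := by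
  rw [Matrix.det_succ_row Mm k]
  rw [Finset.sum_eq_single l]
  · rw [h l, if_pos rfl, mul_one, abs_mul]
    simp [abs_pow]
  · intro j _ hj
    rw [h j, if_neg hj]; ring
  · intro h'; exact absurd (Finset.mem_univ l) h'

lemma unit_rows_bound {M N : ℕ} (Y : Fin N → EuclideanSpace ℝ (Fin (M + N)))
    {w : ℕ} (e f : Fin (w + 2) ↪ Fin N) (A : Matrix (Fin M) (Fin N) ℝ)
    (k k' l l' : Fin (w + 2)) (hk : k ≠ k') (hl : l ≠ l') :
    |Matrix.det (Matrix.of (Function.update (Function.update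
        (fun a b : Fin (w + 2) => (inner ℝ (Bvec A (e a)) (Y (f b)) : ℝ)) k' (Pi.single l' 1))
        k (Pi.single l 1)))|
      ≤ minorMax w Y A := by
  classical
  set Z : Matrix (Fin (w + 2)) (Fin (w + 2)) ℝ :=
    Matrix.of (Function.update (Function.update
      (fun a b : Fin (w + 2) => (inner ℝ (Bvec A (e a)) (Y (f b)) : ℝ)) k' (Pi.single l' 1))
      k (Pi.single l 1)) with hZ
  have hZk : ∀ j, Z k j = if j = l then 1 else 0 := by
    intro j
    show (Function.update _ k (Pi.single l 1) : _ → _ → ℝ) k j = _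
    rw [Function.update_self]
    simp [Pi.single_apply]
  have h1 := abs_det_single_row Z k l hZk
  obtain ⟨k2, hk2⟩ := Fin.exists_succAbove_eq (show k' ≠ k from hk.symm)
  obtain ⟨l2, hl2⟩ := Fin.exists_succAbove_eq (show l' ≠ l from hl.symm)
  set Z1 := Z.submatrix k.succAbove l.succAbove with hZ1
  have hZ1k : ∀ j, Z1 k2 j = if j = l2 then 1 else 0 := by
    intro j
    have e1 : Z1 k2 j = Z k' (l.succAbove j) := by rw [hZ1, Matrix.submatrix_apply, hk2]
    rw [e1]
    have e2 : Z k' = Pi.single l' 1 := by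
      show (Function.update _ k (Pi.single l 1) : _ → _ → ℝ) k' = _
      rw [Function.update_of_ne hk.symm, Function.update_self]
    rw [e2, Pi.single_apply]
    have : (l.succAbove j = l') ↔ (j = l2) := by
      rw [← hl2]
      exact ⟨fun h => Fin.succAbove_right_injective h, fun h => by rw [h]⟩
    simp [this]
  have h2 := abs_det_single_row Z1 k2 l2 hZ1k
  set ek : Fin w ↪ Fin (w + 2) := (Fin.succAboveEmb k2).trans (Fin.succAboveEmb k) with hek
  set el : Fin w ↪ Fin (w + 2) := (Fin.succAboveEmb l2).trans (Fin.succAboveEmb l) with hel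
  have h3 : (Z1.submatrix k2.succAbove l2.succAbove).det
      = minorD w Y (ek.trans e) (el.trans f) A := by
    unfold minorD
    congr 1
    ext a b
    have hne1 : k.succAbove (k2.succAbove a) ≠ k := Fin.succAbove_ne k _
    have hne2 : k.succAbove (k2.succAbove a) ≠ k' := by
      rw [← hk2]
      intro hcc
      exact (Fin.succAbove_ne k2 a) (Fin.succAbove_right_injective hcc)
    show Z (k.succAbove (k2.succAbove a)) (l.succAbove (l2.succAbove b)) = _
    rw [hZ]
    show (Function.update (Function.update _ k' (Pi.single l' 1)) k (Pi.single l 1) : _ → _ → ℝ)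
        (k.succAbove (k2.succAbove a)) (l.succAbove (l2.succAbove b)) = _
    rw [Function.update_of_ne hne1, Function.update_of_ne hne2]
    rfl
  rw [h1, h2, h3]
  exact abs_minorD_le w Y _ _ A

lemma det_two_rows_expand {v : ℕ} (Gr : Fin v → Fin v → ℝ) (k k' : Fin v) (hkk' : k ≠ k')
    (p q : Fin v → ℝ) :
    Matrix.det (Matrix.of (Function.update (Function.update Gr k p) k' q))
      = ∑ l', ∑ l, q l' * (p l * Matrix.det (Matrix.of
          (Function.update (Function.update Gr k' (Pi.single l' 1)) k (Pi.single l 1)))) := by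
  classical
  set dML : MultilinearMap ℝ (fun _ : Fin v => (Fin v → ℝ)) ℝ :=
    (Matrix.detRowAlternating : (Fin v → ℝ) [⋀^Fin v]→ₗ[ℝ] ℝ).toMultilinearMap with hdML
  have hq : q = ∑ l' : Fin v, q l' • (Pi.single l' 1 : Fin v → ℝ) := by
    funext j
    rw [Finset.sum_apply]
    simp [Pi.single_apply]
  have hp : p = ∑ l : Fin v, p l • (Pi.single l 1 : Fin v → ℝ) := by
    funext j
    rw [Finset.sum_apply]
    simp [Pi.single_apply]
  calc Matrix.det (Matrix.of (Function.update (Function.update Gr k p) k' q))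
      = dML (Function.update (Function.update Gr k p) k' q) := rfl
    _ = ∑ l', q l' * dML (Function.update (Function.update Gr k p) k' (Pi.single l' 1)) := by
        conv_lhs => rw [hq]
        rw [MultilinearMap.map_update_sum]
        exact Finset.sum_congr rfl fun l' _ => by
          rw [MultilinearMap.map_update_smul, smul_eq_mul]
    _ = _ := by
        refine Finset.sum_congr rfl fun l' _ => ?_
        rw [Function.update_comm hkk']
        conv_lhs => rw [hp]
        rw [MultilinearMap.map_update_sum, Finset.mul_sum]
        exact Finset.sum_congr rfl fun l _ => by
          rw [MultilinearMap.map_update_smul, smul_eq_mul]; rfl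

/-- The second derivative per-term bound: determinant with two rows replaced by `p` and `q`. -/
lemma two_rows_det_bound {M N : ℕ} (Y : Fin N → EuclideanSpace ℝ (Fin (M + N))) {v : ℕ}
    (hvN2 : v - 2 ≤ N) (e f : Fin v ↪ Fin N) (A : Matrix (Fin M) (Fin N) ℝ)
    {k k' : Fin v} (hkk' : k ≠ k') (p q : Fin v → ℝ) :
    |Matrix.det (Matrix.of (Function.update (Function.update
        (fun a b : Fin v => (inner ℝ (Bvec A (e a)) (Y (f b)) : ℝ)) k p) k' q))|
      ≤ (∑ l, |p l|) * (∑ l', |q l'|) * minorMax (v - 2) Y A := by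
  classical
  have hv2 : 2 ≤ v := by
    by_contra hcon
    push_neg at hcon
    interval_cases v
    · exact k.elim0
    · exact hkk' (Subsingleton.elim k k')
  obtain ⟨w, rfl⟩ : ∃ w, v = w + 2 := ⟨v - 2, by omega⟩
  have hw : w + 2 - 2 = w := by omega
  rw [hw] at hvN2 ⊢
  set Gr : Fin (w + 2) → Fin (w + 2) → ℝ :=
    fun a b => (inner ℝ (Bvec A (e a)) (Y (f b)) : ℝ) with hGr
  have hMx0 : 0 ≤ minorMax w Y A := minorMax_nonneg w hvN2 Y A
  rw [det_two_rows_expand Gr k k' hkk' p q]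
  have key : ∀ l l' : Fin (w + 2),
      |Matrix.det (Matrix.of
          (Function.update (Function.update Gr k' (Pi.single l' 1)) k (Pi.single l 1)))|
        ≤ minorMax w Y A := by
    intro l l'
    by_cases hll : l = l'
    · subst hll
      have hz : Matrix.det (Matrix.of
          (Function.update (Function.update Gr k' (Pi.single l 1)) k (Pi.single l 1))) = 0 := by
        apply Matrix.det_zero_of_row_eq hkk'
        show (Function.update (Function.update Gr k' (Pi.single l 1)) k (Pi.single l 1)
            : _ → _ → ℝ) k = (Function.update (Function.update Gr k' (Pi.single l 1)) k
            (Pi.single l 1) : _ → _ → ℝ) k'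
        rw [Function.update_self, Function.update_of_ne (Ne.symm hkk'), Function.update_self]
      rw [hz, abs_zero]
      exact hMx0
    · exact unit_rows_bound Y e f A k k' l l' hkk' hll
  calc |∑ l', ∑ l, q l' * (p l * Matrix.det (Matrix.of
          (Function.update (Function.update Gr k' (Pi.single l' 1)) k (Pi.single l 1))))|
      ≤ ∑ l', ∑ l, |q l'| * (|p l| * minorMax w Y A) := by
        refine (Finset.abs_sum_le_sum_abs _ _).trans (Finset.sum_le_sum fun l' _ => ?_)
        refine (Finset.abs_sum_le_sum_abs _ _).trans (Finset.sum_le_sum fun l _ => ?_)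
        rw [abs_mul, abs_mul]
        exact mul_le_mul_of_nonneg_left
          (mul_le_mul_of_nonneg_left (key l l') (abs_nonneg _)) (abs_nonneg _)
    _ = (∑ l, |p l|) * (∑ l', |q l'|) * minorMax w Y A := by
        simp_rw [← Finset.mul_sum, ← Finset.sum_mul]
        ring

noncomputable def Cvec {M N : ℕ} (B : Matrix (Fin M) (Fin N) ℝ) (j : Fin N) :
    EuclideanSpace ℝ (Fin (M + N)) :=
  WithLp.toLp 2 (fun l => Fin.addCases (fun i : Fin M => B i j) (fun _ : Fin N => 0) l)

lemma Bvec_add_smul {M N : ℕ} (A B C : Matrix (Fin M) (Fin N) ℝ) (τ s : ℝ) (j : Fin N) :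
    Bvec (A + τ • B + s • C) j = Bvec A j + τ • Cvec B j + s • Cvec C j := by
  ext l
  show Bvec (A + τ • B + s • C) j l
      = Bvec A j l + τ * Cvec B j l + s * Cvec C j l
  refine Fin.addCases (fun i => ?_) (fun i => ?_) l <;>
    simp [Bvec, Cvec, Matrix.add_apply, Matrix.smul_apply, smul_eq_mul]

lemma inner_expand {M N : ℕ} (A B C : Matrix (Fin M) (Fin N) ℝ) (τ s : ℝ) (j : Fin N)
    (y : EuclideanSpace ℝ (Fin (M + N))) :
    (inner ℝ (Bvec (A + τ • B + s • C) j) y : ℝ)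
      = inner ℝ (Bvec A j) y + τ * inner ℝ (Cvec B j) y + s * inner ℝ (Cvec C j) y := by
  rw [Bvec_add_smul, inner_add_left, inner_add_left, real_inner_smul_left, real_inner_smul_left]

lemma norm_Cvec_sq {M N : ℕ} (B : Matrix (Fin M) (Fin N) ℝ) (j : Fin N) :
    ‖Cvec B j‖ ^ 2 = ∑ i : Fin M, (B i j) ^ 2 := by
  rw [← real_inner_self_eq_norm_sq, PiLp.inner_apply]
  rw [Fin.sum_univ_add]
  simp [Cvec, sq]

lemma bessel_bound {M N : ℕ} {Y : Fin N → EuclideanSpace ℝ (Fin (M + N))}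
    (hY : Orthonormal ℝ Y) {v : ℕ} (e f : Fin v ↪ Fin N) (B : Matrix (Fin M) (Fin N) ℝ) :
    ∑ k, ∑ l, (inner ℝ (Cvec B (e k)) (Y (f l)) : ℝ) ^ 2 ≤ (frobNorm B) ^ 2 := by
  have hb : ∀ k : Fin v, ∑ l, (inner ℝ (Cvec B (e k)) (Y (f l)) : ℝ) ^ 2
      ≤ ∑ i : Fin M, (B i (e k)) ^ 2 := by
    intro k
    rw [← norm_Cvec_sq]
    have h := (hY.comp f f.injective).sum_inner_products_le
      (x := Cvec B (e k)) (s := (Finset.univ : Finset (Fin v)))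
    calc ∑ l, (inner ℝ (Cvec B (e k)) (Y (f l)) : ℝ) ^ 2
        = ∑ l, ‖(inner ℝ ((Y ∘ f) l) (Cvec B (e k)) : ℝ)‖ ^ 2 := by
          refine Finset.sum_congr rfl fun l _ => ?_
          rw [Real.norm_eq_abs, sq_abs, Function.comp_apply, real_inner_comm]
      _ ≤ ‖Cvec B (e k)‖ ^ 2 := h
  calc ∑ k, ∑ l, (inner ℝ (Cvec B (e k)) (Y (f l)) : ℝ) ^ 2
      ≤ ∑ k, ∑ i : Fin M, (B i (e k)) ^ 2 := Finset.sum_le_sum fun k _ => hb k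
    _ = ∑ j ∈ Finset.univ.map e, ∑ i : Fin M, (B i j) ^ 2 := by
        rw [Finset.sum_map]
    _ ≤ ∑ j : Fin N, ∑ i : Fin M, (B i j) ^ 2 := by
        refine Finset.sum_le_sum_of_subset_of_nonneg (Finset.subset_univ _) ?_
        intro j _ _; positivity
    _ = (frobNorm B) ^ 2 := by
        rw [frobNorm, Real.sq_sqrt (by positivity)]
        rw [Finset.sum_comm]

lemma sum_abs_le_card_sqrt {v : ℕ} (X : Fin v → Fin v → ℝ) (c : ℝ) (hc : 0 ≤ c)
    (h : ∑ k, ∑ l, (X k l) ^ 2 ≤ c ^ 2) :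
    (∑ k, ∑ l, |X k l|) ≤ (v : ℝ) * c := by
  have h1 : (∑ p : Fin v × Fin v, |X p.1 p.2|) ^ 2
      ≤ ((v * v : ℕ) : ℝ) * ∑ p : Fin v × Fin v, (X p.1 p.2) ^ 2 := by
    have := sq_sum_le_card_mul_sum_sq (s := (Finset.univ : Finset (Fin v × Fin v)))
      (f := fun p => |X p.1 p.2|)
    simpa [sq_abs, Finset.card_univ] using this
  have h2 : ∑ p : Fin v × Fin v, (X p.1 p.2) ^ 2 = ∑ k, ∑ l, (X k l) ^ 2 :=
    Fintype.sum_prod_type (fun p : Fin v × Fin v => (X p.1 p.2) ^ 2)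
  have h3 : (∑ k, ∑ l, |X k l|) = ∑ p : Fin v × Fin v, |X p.1 p.2| :=
    (Fintype.sum_prod_type (fun p : Fin v × Fin v => |X p.1 p.2|)).symm
  rw [h3]
  have hnn : (0 : ℝ) ≤ ∑ p : Fin v × Fin v, |X p.1 p.2| := by positivity
  have h4 : (∑ p : Fin v × Fin v, |X p.1 p.2|) ^ 2 ≤ ((v : ℝ) * c) ^ 2 := by
    calc (∑ p : Fin v × Fin v, |X p.1 p.2|) ^ 2
        ≤ ((v * v : ℕ) : ℝ) * ∑ p : Fin v × Fin v, (X p.1 p.2) ^ 2 := h1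
      _ ≤ ((v * v : ℕ) : ℝ) * c ^ 2 := by
          refine mul_le_mul_of_nonneg_left ?_ (by positivity)
          rw [h2]; exact h
      _ = ((v : ℝ) * c) ^ 2 := by push_cast; ring
  have h5 := Real.sqrt_le_sqrt h4
  rw [Real.sqrt_sq hnn, Real.sqrt_sq (by positivity)] at h5
  exact h5

/-- The second directional derivative of the minor determinant satisfies
|∇_{A''}∇_{A'} D_{(I,J)}(A)| ≤ v²·M_{v−2}(A)·‖A'‖_F·‖A''‖_F (with M_{−1} = M_0 = 1,
realized here via truncated subtraction v − 2 in ℕ). -/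
theorem stmt12 (M N : ℕ) (hM : 1 ≤ M) (hN : 1 ≤ N)
    (Y : Fin N → EuclideanSpace ℝ (Fin (M + N))) (hY : Orthonormal ℝ Y)
    (v : ℕ) (hv : 1 ≤ v) (hvN : v ≤ N)
    (e f : Fin v ↪ Fin N) (A A' A'' : Matrix (Fin M) (Fin N) ℝ) :
    |deriv (fun s : ℝ =>
        deriv (fun τ : ℝ => minorD v Y e f (A + τ • A' + s • A'')) 0) 0| ≤
      (v : ℝ) ^ 2 * minorMax (v - 2) Y A * frobNorm A' * frobNorm A'' := by
  classical
  have hvN2 : v - 2 ≤ N := le_trans (Nat.sub_le v 2) hvN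
  have hMx0 : 0 ≤ minorMax (v - 2) Y A := minorMax_nonneg (v - 2) hvN2 Y A
  have hF' : 0 ≤ frobNorm A' := Real.sqrt_nonneg _
  have hF'' : 0 ≤ frobNorm A'' := Real.sqrt_nonneg _
  set Gr : Fin v → Fin v → ℝ := fun k l => (inner ℝ (Bvec A (e k)) (Y (f l)) : ℝ) with hGr
  set Pr : Fin v → Fin v → ℝ := fun k l => (inner ℝ (Cvec A' (e k)) (Y (f l)) : ℝ) with hPr
  set Qr : Fin v → Fin v → ℝ := fun k l => (inner ℝ (Cvec A'' (e k)) (Y (f l)) : ℝ) with hQr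
  have hfun : ∀ s τ : ℝ, minorD v Y e f (A + τ • A' + s • A'')
      = Matrix.det (Matrix.of ((Gr + s • Qr) + τ • Pr)) := by
    intro s τ
    unfold minorD
    congr 1
    ext k l
    show (inner ℝ (Bvec (A + τ • A' + s • A'') (e k)) (Y (f l)) : ℝ)
        = ((Gr + s • Qr) + τ • Pr) k l
    rw [inner_expand]
    show Gr k l + τ * Pr k l + s * Qr k l = _
    simp only [Pi.add_apply, Pi.smul_apply, smul_eq_mul]
    ring
  have hrw : (fun s : ℝ => deriv (fun τ : ℝ => minorD v Y e f (A + τ • A' + s • A'')) 0)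
      = fun s : ℝ => deriv (fun τ : ℝ => Matrix.det (Matrix.of ((Gr + s • Qr) + τ • Pr))) 0 := by
    funext s
    have : (fun τ : ℝ => minorD v Y e f (A + τ • A' + s • A''))
        = fun τ : ℝ => Matrix.det (Matrix.of ((Gr + s • Qr) + τ • Pr)) :=
      funext fun τ => hfun s τ
    rw [this]
  rw [hrw, deriv_deriv_det]
  -- bound each term
  have hterm : ∀ k k' : Fin v,
      |Matrix.det (Matrix.of (Function.update (Function.update Gr k (Pr k)) k'
          (Function.update Qr k (0 : Fin v → ℝ) k')))|
        ≤ (∑ l, |Pr k l|) * (∑ l', |Qr k' l'|) * minorMax (v - 2) Y A := by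
    intro k k'
    by_cases hke : k' = k
    · subst hke
      have hz : Matrix.det (Matrix.of (Function.update (Function.update Gr k' (Pr k')) k'
          (Function.update Qr k' (0 : Fin v → ℝ) k'))) = 0 := by
        apply Matrix.det_eq_zero_of_row_eq_zero k'
        intro j
        show (Function.update (Function.update Gr k' (Pr k')) k'
            (Function.update Qr k' (0 : Fin v → ℝ) k') : _ → _ → ℝ) k' j = 0
        rw [Function.update_self, Function.update_self]
        rfl
      rw [hz, abs_zero]
      positivity
    · have hke' : Function.update Qr k (0 : Fin v → ℝ) k' = Qr k' :=
        Function.update_of_ne hke _ _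
      rw [hke']
      exact two_rows_det_bound Y hvN2 e f A (fun h => hke h.symm) (Pr k) (Qr k')
  -- sum up
  have hP : (∑ k, ∑ l, |Pr k l|) ≤ (v : ℝ) * frobNorm A' :=
    sum_abs_le_card_sqrt Pr (frobNorm A') hF' (bessel_bound hY e f A')
  have hQ : (∑ k, ∑ l, |Qr k l|) ≤ (v : ℝ) * frobNorm A'' :=
    sum_abs_le_card_sqrt Qr (frobNorm A'') hF'' (bessel_bound hY e f A'')
  have hPnn : (0 : ℝ) ≤ ∑ k, ∑ l, |Pr k l| := by positivity
  have hQnn : (0 : ℝ) ≤ ∑ k, ∑ l, |Qr k l| := by positivity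
  calc |∑ k, ∑ k', Matrix.det (Matrix.of (Function.update (Function.update Gr k (Pr k)) k'
          (Function.update Qr k (0 : Fin v → ℝ) k')))|
      ≤ ∑ k, ∑ k', ((∑ l, |Pr k l|) * (∑ l', |Qr k' l'|) * minorMax (v - 2) Y A) := by
        refine (Finset.abs_sum_le_sum_abs _ _).trans (Finset.sum_le_sum fun k _ => ?_)
        refine (Finset.abs_sum_le_sum_abs _ _).trans (Finset.sum_le_sum fun k' _ => ?_)
        exact hterm k k'
    _ = (∑ k, ∑ l, |Pr k l|) * (∑ k', ∑ l', |Qr k' l'|) * minorMax (v - 2) Y A := by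
        simp_rw [← Finset.sum_mul]
        rw [← Finset.sum_mul_sum]
    _ ≤ ((v : ℝ) * frobNorm A') * ((v : ℝ) * frobNorm A'') * minorMax (v - 2) Y A := by
        refine mul_le_mul_of_nonneg_right ?_ hMx0
        exact mul_le_mul hP hQ hQnn (by positivity)
    _ = (v : ℝ) ^ 2 * minorMax (v - 2) Y A * frobNorm A' * frobNorm A'' := by ring
end

section
/- Let N ≥ 1, let Y₁,...,Y_N be orthonormal vectors in ℝ^{M+N} spanning a subspace S of dimension N, and suppose Y ∈ S satisfies ‖Y‖ ≥ c₁ and, writing Y = ∑_v t_v Y_v, the N numbers s_u = ∑_v t_v m_{uv} (u = 1,...,N) all satisfy |s_u| < c₂, where m_{uv} = B_u · Y_v for vectors B₁,...,B_N ∈ ℝ^{M+N} and D = det(m_{uv}) ≠ 0. Then |D| ≤ N√N · (c₂/c₁) · max_{u,v}|D_{uv}|, where D_{uv} are the cofactors of the matrix (m_{uv}). -/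
/-- If Y₁,...,Y_N are orthonormal in ℝ^{M+N}, Y = ∑ t_v Y_v has ‖Y‖ ≥ c₁ > 0,
m_{uv} = B_u · Y_v has determinant D ≠ 0, and |∑_v t_v m_{uv}| < c₂ for every u, then
|D| ≤ N√N·(c₂/c₁)·max_{u,v}|D_{uv}|, where D_{uv} are the cofactors of (m_{uv}). -/
theorem stmt17 (M n : ℕ)
    (Y : Fin (n + 1) → EuclideanSpace ℝ (Fin (M + (n + 1)))) (hY : Orthonormal ℝ Y)
    (B : Fin (n + 1) → EuclideanSpace ℝ (Fin (M + (n + 1))))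
    (m : Matrix (Fin (n + 1)) (Fin (n + 1)) ℝ)
    (hm : ∀ u v, m u v = (inner ℝ (B u) (Y v) : ℝ))
    (D : ℝ) (hD : D = m.det) (hD0 : D ≠ 0)
    (t : Fin (n + 1) → ℝ) (Yvec : EuclideanSpace ℝ (Fin (M + (n + 1))))
    (hYvec : Yvec = ∑ v, t v • Y v)
    (c₁ c₂ : ℝ) (hc₁ : 0 < c₁) (hc₂ : 0 < c₂)
    (hnorm : c₁ ≤ ‖Yvec‖)
    (hs : ∀ u, |∑ v, t v * m u v| < c₂)
    (cof : Fin (n + 1) → Fin (n + 1) → ℝ)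
    (hcof : ∀ u v, cof u v =
      (-1 : ℝ) ^ ((u : ℕ) + (v : ℕ)) * (m.submatrix u.succAbove v.succAbove).det) :
    |D| ≤ (n + 1 : ℝ) * Real.sqrt (n + 1) * (c₂ / c₁) *
      Finset.univ.sup' Finset.univ_nonempty
        (fun p : Fin (n + 1) × Fin (n + 1) => |cof p.1 p.2|) := by
  set K := Finset.univ.sup' Finset.univ_nonempty
      (fun p : Fin (n + 1) × Fin (n + 1) => |cof p.1 p.2|) with hK
  have hKnn : 0 ≤ K := le_trans (abs_nonneg _)
    (Finset.le_sup' (fun p : Fin (n + 1) × Fin (n + 1) => |cof p.1 p.2|)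
      (Finset.mem_univ (0, 0)))
  have hKle : ∀ u v, |cof u v| ≤ K := fun u v =>
    Finset.le_sup' (fun p : Fin (n + 1) × Fin (n + 1) => |cof p.1 p.2|)
      (Finset.mem_univ (u, v))
  -- norm squared equals sum of squares
  have hsum : ‖Yvec‖ ^ 2 = ∑ v, t v ^ 2 := by
    have h := hY.inner_sum t t Finset.univ
    rw [hYvec, ← real_inner_self_eq_norm_sq]
    simpa [pow_two] using h
  -- pick v₀ maximizing |t v|
  obtain ⟨v₀, -, hv₀⟩ := Finset.exists_max_image (Finset.univ : Finset (Fin (n+1)))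
    (fun v => |t v|) Finset.univ_nonempty
  have ht0 : c₁ ^ 2 ≤ (n + 1 : ℝ) * |t v₀| ^ 2 := by
    calc c₁ ^ 2 ≤ ‖Yvec‖ ^ 2 := by
          apply pow_le_pow_left₀ hc₁.le hnorm
      _ = ∑ v, t v ^ 2 := hsum
      _ ≤ ∑ _v : Fin (n+1), |t v₀| ^ 2 := by
          apply Finset.sum_le_sum
          intro v _
          rw [← sq_abs (t v)]
          exact pow_le_pow_left₀ (abs_nonneg _) (hv₀ v (Finset.mem_univ v)) 2
      _ = (n + 1 : ℝ) * |t v₀| ^ 2 := by simp [mul_comm]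
  have hc1le : c₁ ≤ Real.sqrt (n + 1) * |t v₀| := by
    have := Real.sqrt_le_sqrt ht0
    rwa [Real.sqrt_sq hc₁.le, Real.sqrt_mul (by positivity),
      Real.sqrt_sq (abs_nonneg _)] at this
  -- Cramer
  have hcram : D * t v₀ = ∑ u, cof u v₀ * (∑ v, t v * m u v) := by
    have h : m.adjugate.mulVec (m.mulVec t) = m.det • t := by
      rw [Matrix.mulVec_mulVec, Matrix.adjugate_mul, Matrix.smul_mulVec,
        Matrix.one_mulVec]
    have h2 := congrFun h v₀
    have hl : (m.det • t) v₀ = D * t v₀ := by simp [hD]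
    rw [hl] at h2
    rw [← h2]
    simp only [Matrix.mulVec, dotProduct]
    apply Finset.sum_congr rfl
    intro u _
    rw [Matrix.adjugate_fin_succ_eq_det_submatrix, ← hcof u v₀]
    congr 1
    apply Finset.sum_congr rfl
    intro v _
    ring
  have hbound : |D| * |t v₀| ≤ (n + 1 : ℝ) * c₂ * K := by
    calc |D| * |t v₀| = |D * t v₀| := (abs_mul _ _).symm
      _ ≤ ∑ u, |cof u v₀ * (∑ v, t v * m u v)| := by
          rw [hcram]; exact Finset.abs_sum_le_sum_abs _ _
      _ ≤ ∑ _u : Fin (n+1), K * c₂ := by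
          apply Finset.sum_le_sum
          intro u _
          rw [abs_mul]
          exact mul_le_mul (hKle u v₀) (hs u).le (abs_nonneg _) hKnn
      _ = (n + 1 : ℝ) * (K * c₂) := by simp [mul_comm]
      _ = (n + 1 : ℝ) * c₂ * K := by ring
  -- combine
  have key : |D| * c₁ ≤ (n + 1 : ℝ) * Real.sqrt (n + 1) * c₂ * K := by
    calc |D| * c₁ ≤ |D| * (Real.sqrt (n + 1) * |t v₀|) :=
          mul_le_mul_of_nonneg_left hc1le (abs_nonneg _)
      _ = Real.sqrt (n + 1) * (|D| * |t v₀|) := by ring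
      _ ≤ Real.sqrt (n + 1) * ((n + 1 : ℝ) * c₂ * K) := by
          apply mul_le_mul_of_nonneg_left hbound (Real.sqrt_nonneg _)
      _ = (n + 1 : ℝ) * Real.sqrt (n + 1) * c₂ * K := by ring
  rw [show (n + 1 : ℝ) * Real.sqrt (n + 1) * (c₂ / c₁) * K
      = ((n + 1 : ℝ) * Real.sqrt (n + 1) * c₂ * K) / c₁ by field_simp]
  rw [le_div_iff₀ hc₁]
  exact key
end
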